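/- Let r, σ, b > 0, a ∈ ℝ, and let δ > 0 satisfy a + δ > 0. Set c = min(σ, 1, b/2), η = (σ + δ·r)/(a + δ), V(x, y, z) = x² + δ·y² + (a + δ)·(z − η)², and R = b·(σ + δ·r)²/(2c·(a + δ)). Then every differentiable solution u : [0, ∞) → ℝ³ of the Lorenz-like system satisfies limsup_{t → ∞} V(u(t)) ≤ R; i.e., the set B = {(x, y, z) : V(x, y, z) ≤ R} is absorbing. -/

import Mathlib

private lemma lorenz_key_ineq (r σ b a δ c η X Y Z : ℝ) (hcσ : c ≤ σ) (hc1 : c ≤ 1)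
    (hcb : 2*c ≤ b) (hb : 0 < b) (hδ : 0 < δ) (haδ : 0 < a + δ)
    (hη : σ + δ*r = (a+δ)*η) :
    2*X*(-σ*(X-Y) - a*Y*Z) + δ*(2*Y*(r*X - Y - X*Z)) + (a+δ)*(2*(Z-η)*(-b*Z + X*Y))
      + 2*c*(X^2 + δ*Y^2 + (a+δ)*(Z-η)^2) ≤ b*(a+δ)*η^2 := by
  have e1 : 0 ≤ (σ - c)*X^2 := mul_nonneg (by linarith) (sq_nonneg X)
  have e2 : 0 ≤ (1 - c)*(δ*Y^2) := mul_nonneg (by linarith) (mul_nonneg hδ.le (sq_nonneg Y))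
  have e3 : 0 ≤ (a+δ)*((b-2*c)*(Z-η)^2) := mul_nonneg haδ.le (mul_nonneg (by linarith) (sq_nonneg _))
  have e4 : 0 ≤ (a+δ)*(b*Z^2) := mul_nonneg haδ.le (mul_nonneg hb.le (sq_nonneg _))
  have key : b*(a+δ)*η^2 - (2*X*(-σ*(X-Y) - a*Y*Z) + δ*(2*Y*(r*X - Y - X*Z))
      + (a+δ)*(2*(Z-η)*(-b*Z + X*Y)) + 2*c*(X^2 + δ*Y^2 + (a+δ)*(Z-η)^2))
      = 2*((σ - c)*X^2) + 2*((1 - c)*(δ*Y^2)) + (a+δ)*((b-2*c)*(Z-η)^2) + (a+δ)*(b*Z^2)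
        - 2*X*Y*((σ + δ*r) - (a+δ)*η) := by ring
  rw [hη] at key
  linarith [key]

/-- The set `B = {V ≤ R}` is absorbing for the Lorenz-like system: every
solution `u` on `[0, ∞)` satisfies `limsup_{t→∞} V(u(t)) ≤ R`, where
`V(x,y,z) = x² + δy² + (a+δ)(z−η)²`, `η = (σ+δr)/(a+δ)`, `c = min(σ,1,b/2)` and
`R = b(σ+δr)²/(2c(a+δ))`. -/
theorem stmt_13 (r σ b a δ : ℝ) (hr : 0 < r) (hσ : 0 < σ) (hb : 0 < b)
    (hδ : 0 < δ) (haδ : 0 < a + δ)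
    (x y z : ℝ → ℝ)
    (hx : ∀ t, 0 ≤ t → HasDerivAt x (-σ * (x t - y t) - a * y t * z t) t)
    (hy : ∀ t, 0 ≤ t → HasDerivAt y (r * x t - y t - x t * z t) t)
    (hz : ∀ t, 0 ≤ t → HasDerivAt z (-b * z t + x t * y t) t) :
    let c := min σ (min 1 (b / 2))
    let η := (σ + δ * r) / (a + δ)
    let V : ℝ → ℝ → ℝ → ℝ := fun X Y Z =>
      X ^ 2 + δ * Y ^ 2 + (a + δ) * (Z - η) ^ 2
    let R := b * (σ + δ * r) ^ 2 / (2 * c * (a + δ))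
    Filter.limsup (fun t => V (x t) (y t) (z t)) Filter.atTop ≤ R := by
  intro c η V R
  have hc : 0 < c := lt_min hσ (lt_min one_pos (half_pos hb))
  have hcσ : c ≤ σ := min_le_left _ _
  have hc1 : c ≤ 1 := le_trans (min_le_right _ _) (min_le_left _ _)
  have hcb : 2 * c ≤ b := by
    have := le_trans (min_le_right σ _) (min_le_right 1 (b/2))
    linarith
  have hη : σ + δ * r = (a + δ) * η := by
    show σ + δ * r = (a + δ) * ((σ + δ * r) / (a + δ))
    field_simp
  have hR : 2 * c * R = b * (a + δ) * η ^ 2 := by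
    show 2 * c * (b * (σ + δ * r) ^ 2 / (2 * c * (a + δ))) = _
    rw [hη]
    field_simp
  -- the composite Lyapunov function
  set E : ℝ → ℝ := fun t => V (x t) (y t) (z t) with hE
  have hE' : ∀ t, 0 ≤ t → HasDerivAt E
      (2 * x t * (-σ * (x t - y t) - a * y t * z t)
        + δ * (2 * y t * (r * x t - y t - x t * z t))
        + (a + δ) * (2 * (z t - η) * (-b * z t + x t * y t))) t := by
    intro t ht
    have h1 := (hx t ht).pow 2
    have h2 := ((hy t ht).pow 2).const_mul δ
    have h3 := (((hz t ht).sub_const η).pow 2).const_mul (a + δ)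
    have := (h1.add h2).add h3
    exact this.congr_deriv (by push_cast; ring)
  -- Gronwall: W t = (E t - R) * exp (2 c t) is antitone on [0, ∞)
  set W : ℝ → ℝ := fun t => (E t - R) * Real.exp (2 * c * t) with hW
  have hWderiv : ∀ t, 0 ≤ t → HasDerivAt W
      ((2 * x t * (-σ * (x t - y t) - a * y t * z t)
        + δ * (2 * y t * (r * x t - y t - x t * z t))
        + (a + δ) * (2 * (z t - η) * (-b * z t + x t * y t))) * Real.exp (2 * c * t)
        + (E t - R) * (Real.exp (2 * c * t) * (2 * c))) t := by
    intro t ht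
    have := ((hE' t ht).sub_const R).mul (((hasDerivAt_id t).const_mul (2*c)).exp)
    simp at this
    exact this.congr_deriv (by ring)
  have hWanti : AntitoneOn W (Set.Ici (0:ℝ)) := by
    apply antitoneOn_of_deriv_nonpos (convex_Ici 0)
    · exact fun t ht => (hWderiv t ht).continuousAt.continuousWithinAt
    · rw [interior_Ici]
      exact fun t ht => (hWderiv t (le_of_lt ht)).differentiableAt.differentiableWithinAt
    · rw [interior_Ici]
      intro t ht
      rw [(hWderiv t (le_of_lt ht)).deriv]
      have hexp : 0 < Real.exp (2 * c * t) := Real.exp_pos _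
      have hk := lorenz_key_ineq r σ b a δ c η (x t) (y t) (z t) hcσ hc1 hcb hb hδ haδ hη
      have hEt : E t = (x t)^2 + δ*(y t)^2 + (a+δ)*(z t - η)^2 := rfl
      have : (2 * x t * (-σ * (x t - y t) - a * y t * z t)
          + δ * (2 * y t * (r * x t - y t - x t * z t))
          + (a + δ) * (2 * (z t - η) * (-b * z t + x t * y t)))
          + 2 * c * (E t - R) ≤ 0 := by
        rw [hEt]; nlinarith [hk, hR]
      nlinarith [this, hexp]
  -- hence E t ≤ R + (E 0 - R) * exp (-(2 c t)) for t ≥ 0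
  have hbound : ∀ t : ℝ, 0 ≤ t → E t ≤ R + (E 0 - R) * Real.exp (-(2 * c * t)) := by
    intro t ht
    have h := hWanti (Set.self_mem_Ici) ht ht
    have hW0 : W 0 = E 0 - R := by simp [hW]
    have hWt : W t = (E t - R) * Real.exp (2 * c * t) := rfl
    rw [hW0, hWt] at h
    have hexp : 0 < Real.exp (2 * c * t) := Real.exp_pos _
    have hinv : Real.exp (-(2 * c * t)) = (Real.exp (2 * c * t))⁻¹ := by
      rw [Real.exp_neg]
    rw [hinv]
    have h2 := mul_le_mul_of_nonneg_right h (inv_pos.2 hexp).le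
    rw [mul_assoc, mul_inv_cancel₀ (ne_of_gt hexp), mul_one] at h2
    linarith
  -- the comparison function tends to R
  have hg : Filter.Tendsto (fun t : ℝ => R + (E 0 - R) * Real.exp (-(2 * c * t)))
      Filter.atTop (nhds R) := by
    have h1 : Filter.Tendsto (fun t : ℝ => 2 * c * t) Filter.atTop Filter.atTop :=
      Filter.Tendsto.const_mul_atTop (by linarith) Filter.tendsto_id
    have h2 : Filter.Tendsto (fun t : ℝ => Real.exp (-(2 * c * t))) Filter.atTop (nhds 0) := by
      have := Real.tendsto_exp_neg_atTop_nhds_zero.comp h1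
      exact this
    have h3 := (h2.const_mul (E 0 - R)).const_add R
    simpa using h3
  have hEnonneg : ∀ t, 0 ≤ E t := by
    intro t
    have : E t = (x t)^2 + δ*(y t)^2 + (a+δ)*(z t - η)^2 := rfl
    rw [this]
    positivity
  have hcobdd : Filter.IsCoboundedUnder (· ≤ ·) Filter.atTop E :=
    Filter.isCoboundedUnder_le_of_le Filter.atTop (x := 0) (fun t => hEnonneg t)
  have hbdd : Filter.IsBoundedUnder (· ≤ ·) Filter.atTop
      (fun t : ℝ => R + (E 0 - R) * Real.exp (-(2 * c * t))) :=
    hg.isBoundedUnder_le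
  calc Filter.limsup E Filter.atTop
      ≤ Filter.limsup (fun t : ℝ => R + (E 0 - R) * Real.exp (-(2 * c * t)))
          Filter.atTop := by
        apply Filter.limsup_le_limsup _ hcobdd hbdd
        filter_upwards [Filter.eventually_ge_atTop (0:ℝ)] with t ht
        exact hbound t ht
    _ = R := hg.limsup_eq
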